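/- Let D = (E,𝓕) be a vf-safe delta-matroid and let e ∈ E. Then: (1) e is a ribbon loop of D if and only if e is a ribbon loop of D+e; (2) a ribbon loop e is non-orientable in D if and only if it is orientable in D+e; (3) a ribbon loop e is trivial in D if and only if it is trivial in D+e; and (4) e is a coloop of D if and only if e is a coloop of D+e. -/
import Mathlib


open scoped symmDiff

structure SetSystem (α : Type) [DecidableEq α] where
  E : Finset α
  F : Finset (Finset α)

namespace SetSystem

variable {α : Type} [DecidableEq α]

/-- A delta-matroid: nonempty collection of feasible subsets of the ground set
satisfying the symmetric exchange axiom. -/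
def IsDeltaMatroid (D : SetSystem α) : Prop :=
  D.F.Nonempty ∧ (∀ F ∈ D.F, F ⊆ D.E) ∧
    ∀ X ∈ D.F, ∀ Y ∈ D.F, ∀ u ∈ X ∆ Y, ∃ v ∈ X ∆ Y, X ∆ ({u, v} : Finset α) ∈ D.F

/-- A matroid, viewed as a delta-matroid whose feasible sets are equicardinal. -/
def IsMatroid (D : SetSystem α) : Prop :=
  D.IsDeltaMatroid ∧ ∀ F₁ ∈ D.F, ∀ F₂ ∈ D.F, F₁.card = F₂.card

/-- The twist `D*A`. -/
def twist (D : SetSystem α) (A : Finset α) : SetSystem α :=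
  ⟨D.E, D.F.image fun F => A ∆ F⟩

/-- The dual `D* := D * E`. -/
def dual (D : SetSystem α) : SetSystem α := D.twist D.E

def IsLoop (D : SetSystem α) (e : α) : Prop := ∀ F ∈ D.F, e ∉ F

def IsColoop (D : SetSystem α) (e : α) : Prop := ∀ F ∈ D.F, e ∈ F

open Classical in
/-- Deletion of a single element (when `e` is a coloop, `D∖e := D/e`). -/
noncomputable def del (D : SetSystem α) (e : α) : SetSystem α :=
  if D.IsColoop e then ⟨D.E.erase e, D.F.image fun F => F.erase e⟩
  else ⟨D.E.erase e, D.F.filter fun F => e ∉ F⟩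

open Classical in
/-- Contraction of a single element (when `e` is a loop, `D/e := D∖e`). -/
noncomputable def con (D : SetSystem α) (e : α) : SetSystem α :=
  if D.IsLoop e then ⟨D.E.erase e, D.F.filter fun F => e ∉ F⟩
  else ⟨D.E.erase e, (D.F.filter fun F => e ∈ F).image fun F => F.erase e⟩

/-- Loop complementation on a single element. -/
def lc (D : SetSystem α) (e : α) : SetSystem α :=
  ⟨D.E, D.F ∆ ((D.F.filter fun F => e ∉ F).image fun F => insert e F)⟩

/-- Loop complementation on a set of elements (applied in some order;
the operation is order-independent). -/
noncomputable def lcSet (D : SetSystem α) (A : Finset α) : SetSystem α :=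
  A.toList.foldl lc D

/-- The dual pivot `D *̄ A := ((D*A)+A)*A`. -/
noncomputable def dpivot (D : SetSystem α) (A : Finset α) : SetSystem α :=
  ((D.twist A).lcSet A).twist A

/-- Set systems reachable from `D` by sequences of twists and loop complementations. -/
inductive Reachable : SetSystem α → SetSystem α → Prop
  | refl (D : SetSystem α) : Reachable D D
  | twist (D D' : SetSystem α) (A : Finset α) (hA : A ⊆ D'.E) :
      Reachable D D' → Reachable D (D'.twist A)
  | lc (D D' : SetSystem α) (A : Finset α) (hA : A ⊆ D'.E) :
      Reachable D D' → Reachable D (D'.lcSet A)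

/-- A vf-safe delta-matroid: any sequence of twists and loop complementations
yields a delta-matroid. -/
def VfSafe (D : SetSystem α) : Prop := ∀ D', Reachable D D' → D'.IsDeltaMatroid

/-- The minimum-cardinality feasible sets. -/
def Fmin (D : SetSystem α) : Finset (Finset α) :=
  D.F.filter fun F => ∀ F' ∈ D.F, F.card ≤ F'.card

/-- The maximum-cardinality feasible sets. -/
def Fmax (D : SetSystem α) : Finset (Finset α) :=
  D.F.filter fun F => ∀ F' ∈ D.F, F'.card ≤ F.card

/-- The lower matroid `D_min`. -/
def Dmin (D : SetSystem α) : SetSystem α := ⟨D.E, D.Fmin⟩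

def IsRibbonLoop (D : SetSystem α) (e : α) : Prop := ∀ F ∈ D.Fmin, e ∉ F

def IsNonorientableRL (D : SetSystem α) (e : α) : Prop :=
  D.IsRibbonLoop e ∧ (D.twist {e}).IsRibbonLoop e

def IsOrientableRL (D : SetSystem α) (e : α) : Prop :=
  D.IsRibbonLoop e ∧ (D.dpivot {e}).IsRibbonLoop e

def IsTrivialOrientableRL (D : SetSystem α) (e : α) : Prop :=
  D.IsOrientableRL e ∧ D.IsLoop e

def IsTrivialNonorientableRL (D : SetSystem α) (e : α) : Prop :=
  D.IsNonorientableRL e ∧ (D.lc e).IsLoop e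



section Aux

variable {α : Type} [DecidableEq α] {D : SetSystem α} {e : α} {G : Finset α}

lemma mem_lc : G ∈ (D.lc e).F ↔
    (G ∈ D.F ∧ ¬(e ∈ G ∧ G.erase e ∈ D.F)) ∨ ((e ∈ G ∧ G.erase e ∈ D.F) ∧ G ∉ D.F) := by
  have himg : (G ∈ (D.F.filter fun F => e ∉ F).image fun F => insert e F) ↔
      (e ∈ G ∧ G.erase e ∈ D.F) := by
    simp only [Finset.mem_image, Finset.mem_filter]
    constructor
    · rintro ⟨F, ⟨hF, heF⟩, rfl⟩
      simp [Finset.erase_insert heF, hF]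
    · rintro ⟨heG, h⟩
      exact ⟨G.erase e, ⟨h, Finset.notMem_erase e G⟩, Finset.insert_erase heG⟩
  rw [lc]
  simp only [Finset.mem_symmDiff]
  rw [himg]

lemma mem_lc_not (h : e ∉ G) : G ∈ (D.lc e).F ↔ G ∈ D.F := by
  rw [mem_lc]; simp [h]

lemma mem_twist {A : Finset α} : G ∈ (D.twist A).F ↔ A ∆ G ∈ D.F := by
  simp only [twist, Finset.mem_image]
  constructor
  · rintro ⟨F, hF, rfl⟩; rwa [symmDiff_symmDiff_cancel_left]
  · intro h; exact ⟨A ∆ G, h, symmDiff_symmDiff_cancel_left A G⟩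

lemma symmDiff_singleton_of_mem (h : e ∈ G) : ({e} : Finset α) ∆ G = G.erase e := by
  ext a
  simp only [Finset.mem_symmDiff, Finset.mem_singleton, Finset.mem_erase]
  by_cases ha : a = e <;> simp [ha, h]

lemma symmDiff_singleton_of_not_mem (h : e ∉ G) : ({e} : Finset α) ∆ G = insert e G := by
  ext a
  simp only [Finset.mem_symmDiff, Finset.mem_singleton, Finset.mem_insert]
  by_cases ha : a = e <;> subst_eqs <;> simp_all

lemma lcSet_singleton (D : SetSystem α) (e : α) : D.lcSet {e} = D.lc e := by
  simp [lcSet, Finset.toList_singleton]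

lemma dpivot_singleton (D : SetSystem α) (e : α) :
    D.dpivot {e} = ((D.twist {e}).lc e).twist {e} := by
  rw [dpivot, lcSet_singleton]

lemma rl_congr {D₁ D₂ : SetSystem α} (h : D₁.F = D₂.F) (e : α) :
    D₁.IsRibbonLoop e ↔ D₂.IsRibbonLoop e := by
  unfold IsRibbonLoop Fmin
  rw [h]

lemma mem_Fmin : G ∈ D.Fmin ↔ G ∈ D.F ∧ ∀ F' ∈ D.F, G.card ≤ F'.card := Finset.mem_filter

lemma rl_lc_of_rl (hne : D.F.Nonempty) (h : D.IsRibbonLoop e) :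
    (D.lc e).IsRibbonLoop e := by
  obtain ⟨F₀, hF₀, hmin⟩ := D.F.exists_min_image Finset.card hne
  have heF₀ : e ∉ F₀ := h F₀ (mem_Fmin.2 ⟨hF₀, hmin⟩)
  have hF₀lc : F₀ ∈ (D.lc e).F := mem_lc.2 (Or.inl ⟨hF₀, fun hc => heF₀ hc.1⟩)
  intro G hG heG
  obtain ⟨hGmem, hGmin⟩ := mem_Fmin.1 hG
  have hle : G.card ≤ F₀.card := hGmin F₀ hF₀lc
  rcases mem_lc.1 hGmem with ⟨hGF, _⟩ | ⟨⟨_, hGe⟩, _⟩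
  · exact h G (mem_Fmin.2 ⟨hGF, fun F' hF' => le_trans hle (hmin F' hF')⟩) heG
  · have h1 : F₀.card ≤ (G.erase e).card := hmin _ hGe
    have h2 : (G.erase e).card < G.card := Finset.card_erase_lt_of_mem heG
    omega

lemma lc_lc_F (D : SetSystem α) (e : α) : ((D.lc e).lc e).F = D.F := by
  ext G
  by_cases heG : e ∈ G
  · rw [mem_lc, mem_lc, mem_lc_not (Finset.notMem_erase e G)]
    simp only [heG, true_and]
    tauto
  · rw [mem_lc_not heG, mem_lc_not heG]

lemma lc_nonempty (hne : D.F.Nonempty) : (D.lc e).F.Nonempty := by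
  obtain ⟨F, hF⟩ := hne
  by_cases hFe : F ∈ (D.lc e).F
  · exact ⟨F, hFe⟩
  · have hc : e ∈ F ∧ F.erase e ∈ D.F := by
      by_contra hc
      exact hFe (mem_lc.2 (Or.inl ⟨hF, hc⟩))
    exact ⟨F.erase e, (mem_lc_not (Finset.notMem_erase e F)).2 hc.2⟩

lemma rl_lc_iff (hne : D.F.Nonempty) : D.IsRibbonLoop e ↔ (D.lc e).IsRibbonLoop e := by
  constructor
  · exact rl_lc_of_rl hne
  · intro h
    exact (rl_congr (lc_lc_F D e) e).1 (rl_lc_of_rl (lc_nonempty hne) h)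

lemma coloop_lc_iff : D.IsColoop e ↔ (D.lc e).IsColoop e := by
  constructor
  · intro h G hG
    rcases mem_lc.1 hG with ⟨hGF, _⟩ | ⟨⟨he', _⟩, _⟩
    · exact h G hGF
    · exact he'
  · intro h F hF
    by_contra heF
    exact heF (h F (mem_lc.2 (Or.inl ⟨hF, fun c => heF c.1⟩)))

lemma twist_nonempty {A : Finset α} (hne : D.F.Nonempty) : (D.twist A).F.Nonempty :=
  hne.image _

lemma dpivot_lc_F (D : SetSystem α) (e : α) :
    ((D.lc e).dpivot {e}).F = ((D.twist {e}).lc e).F := by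
  ext G
  rw [dpivot_singleton]
  by_cases heG : e ∈ G
  · have h3 : e ∉ G.erase e := Finset.notMem_erase e G
    have h1 : ({e} : Finset α) ∆ G = G.erase e := symmDiff_singleton_of_mem heG
    have h2 : ({e} : Finset α) ∆ (G.erase e) = G := by
      rw [symmDiff_singleton_of_not_mem h3, Finset.insert_erase heG]
    simp only [mem_twist, mem_lc, h1, h2, Finset.erase_idem, heG, h3]
    tauto
  · have hg : e ∈ insert e G := Finset.mem_insert_self e G
    have hgE : (insert e G).erase e = G := Finset.erase_insert heG
    have h1 : ({e} : Finset α) ∆ G = insert e G := symmDiff_singleton_of_not_mem heG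
    have h2 : ({e} : Finset α) ∆ (insert e G) = G := by
      rw [symmDiff_singleton_of_mem hg, hgE]
    simp only [mem_twist, mem_lc, h1, h2, hgE, hg, heG]
    tauto

lemma nonor_iff_or_lc (hne : D.F.Nonempty) (hrl : D.IsRibbonLoop e) :
    D.IsNonorientableRL e ↔ (D.lc e).IsOrientableRL e := by
  have h1 : D.IsRibbonLoop e ↔ (D.lc e).IsRibbonLoop e := rl_lc_iff hne
  have h3 : ((D.lc e).dpivot {e}).IsRibbonLoop e ↔ ((D.twist {e}).lc e).IsRibbonLoop e :=
    rl_congr (dpivot_lc_F D e) e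
  have h4 : (D.twist {e}).IsRibbonLoop e ↔ ((D.twist {e}).lc e).IsRibbonLoop e :=
    rl_lc_iff (twist_nonempty hne)
  constructor
  · rintro ⟨hA, hB⟩
    exact ⟨h1.1 hA, h3.2 (h4.1 hB)⟩
  · rintro ⟨hA, hB⟩
    exact ⟨hrl, h4.2 (h3.1 hB)⟩

lemma dpivot_F_of_loop (hl : D.IsLoop e) : (D.dpivot {e}).F = D.F := by
  ext G
  rw [dpivot_singleton]
  by_cases heG : e ∈ G
  · have h3 : e ∉ G.erase e := Finset.notMem_erase e G
    have h1 : ({e} : Finset α) ∆ G = G.erase e := symmDiff_singleton_of_mem heG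
    have h2 : ({e} : Finset α) ∆ (G.erase e) = G := by
      rw [symmDiff_singleton_of_not_mem h3, Finset.insert_erase heG]
    have hG : G ∉ D.F := fun h => hl G h heG
    simp only [mem_twist, mem_lc, h1, h2, Finset.erase_idem, heG, h3]
    tauto
  · have hg : e ∈ insert e G := Finset.mem_insert_self e G
    have hgE : (insert e G).erase e = G := Finset.erase_insert heG
    have h1 : ({e} : Finset α) ∆ G = insert e G := symmDiff_singleton_of_not_mem heG
    have h2 : ({e} : Finset α) ∆ (insert e G) = G := by
      rw [symmDiff_singleton_of_mem hg, hgE]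
    have hG : insert e G ∉ D.F := fun h => hl _ h hg
    simp only [mem_twist, mem_lc, h1, h2, hgE, hg, heG]
    tauto

lemma twist_F_of_P (hP : ∀ G : Finset α, e ∈ G → (G ∈ D.F ↔ G.erase e ∈ D.F)) :
    (D.twist {e}).F = D.F := by
  ext G
  rw [mem_twist]
  by_cases heG : e ∈ G
  · rw [symmDiff_singleton_of_mem heG]
    exact (hP G heG).symm
  · rw [symmDiff_singleton_of_not_mem heG]
    have := hP (insert e G) (Finset.mem_insert_self e G)
    rw [Finset.erase_insert heG] at this
    exact this

lemma loop_lc_iff_P : (D.lc e).IsLoop e ↔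
    ∀ G : Finset α, e ∈ G → (G ∈ D.F ↔ G.erase e ∈ D.F) := by
  constructor
  · intro h G heG
    have hG : G ∉ (D.lc e).F := fun hm => h G hm heG
    rw [mem_lc] at hG
    constructor
    · intro ha
      by_contra hb
      exact hG (Or.inl ⟨ha, fun c => hb c.2⟩)
    · intro hb
      by_contra ha
      exact hG (Or.inr ⟨⟨heG, hb⟩, ha⟩)
  · intro h G hG heG
    rcases mem_lc.1 hG with ⟨ha, hb⟩ | ⟨⟨_, hb⟩, ha⟩
    · exact hb ⟨heG, (h G heG).1 ha⟩
    · exact ha ((h G heG).2 hb)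

lemma P_lc_iff : (∀ G : Finset α, e ∈ G → (G ∈ (D.lc e).F ↔ G.erase e ∈ (D.lc e).F)) ↔
    D.IsLoop e := by
  constructor
  · intro h F hF heF
    have := h F heF
    rw [mem_lc, mem_lc_not (Finset.notMem_erase e F)] at this
    tauto
  · intro hl G heG
    have hG : G ∉ D.F := fun hm => hl G hm heG
    rw [mem_lc, mem_lc_not (Finset.notMem_erase e G)]
    tauto

lemma loop_imp_rl (hl : D.IsLoop e) : D.IsRibbonLoop e :=
  fun F hF => hl F (mem_Fmin.1 hF).1

lemma trivial_iff (hrl : D.IsRibbonLoop e) :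
    (D.IsTrivialOrientableRL e ∨ D.IsTrivialNonorientableRL e) ↔
      (D.IsLoop e ∨ ∀ G : Finset α, e ∈ G → (G ∈ D.F ↔ G.erase e ∈ D.F)) := by
  constructor
  · rintro (⟨_, hl⟩ | ⟨_, hl⟩)
    · exact Or.inl hl
    · exact Or.inr (loop_lc_iff_P.1 hl)
  · rintro (hl | hP)
    · exact Or.inl ⟨⟨hrl, (rl_congr (dpivot_F_of_loop hl) e).2 hrl⟩, hl⟩
    · exact Or.inr ⟨⟨hrl, (rl_congr (twist_F_of_P hP) e).2 hrl⟩, loop_lc_iff_P.2 hP⟩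

end Aux


/-- Behaviour of ribbon loops, their orientability and triviality, and coloops
under loop complementation. -/
theorem lc_ribbon_loops (D : SetSystem α) (hD : D.VfSafe) (e : α) (he : e ∈ D.E) :
    (D.IsRibbonLoop e ↔ (D.lc e).IsRibbonLoop e) ∧
    (D.IsRibbonLoop e → (D.IsNonorientableRL e ↔ (D.lc e).IsOrientableRL e)) ∧
    (D.IsRibbonLoop e →
      ((D.IsTrivialOrientableRL e ∨ D.IsTrivialNonorientableRL e) ↔
        ((D.lc e).IsTrivialOrientableRL e ∨ (D.lc e).IsTrivialNonorientableRL e))) ∧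
    (D.IsColoop e ↔ (D.lc e).IsColoop e) := by
  have hne : D.F.Nonempty := (hD D (Reachable.refl D)).1
  refine ⟨rl_lc_iff hne, fun hrl => nonor_iff_or_lc hne hrl, fun hrl => ?_, coloop_lc_iff⟩
  rw [trivial_iff hrl, trivial_iff ((rl_lc_iff hne).1 hrl)]
  rw [show ((D.lc e).IsLoop e ↔ _) from loop_lc_iff_P,
      show ((∀ G : Finset α, e ∈ G → (G ∈ (D.lc e).F ↔ G.erase e ∈ (D.lc e).F)) ↔ _) from P_lc_iff]
  tauto

end SetSystem
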